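/- Let F, G be purposive discrete distributions with finite means. If F ≼_∧ G, then F ≤_dil G, i.e., E[φ(X - E[X])] ≤ E[φ(Y - E[Y])] for all convex φ : ℝ → ℝ for which the expectations exist, where X ~ F, Y ~ G. -/

import Mathlib

/-- A purposive discrete distribution: support indexed by an interval of `ℤ`
with at least two elements, strictly increasing support points `x` and
positive probabilities `p` summing to one. -/
structure DiscDist where
  A : Set ℤ
  x : ℤ → ℝ
  p : ℤ → ℝ
  hA2 : ∃ a b, a ∈ A ∧ b ∈ A ∧ a ≠ b
  hAconn : ∀ a b c : ℤ, a ∈ A → c ∈ A → a ≤ b → b ≤ c → b ∈ A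
  hmono : ∀ a b : ℤ, a ∈ A → b ∈ A → a < b → x a < x b
  hpos : ∀ a ∈ A, 0 < p a
  hzero : ∀ a ∉ A, p a = 0
  hsummable : Summable p
  hsum : ∑' a, p a = 1

/-- Cumulative probability strictly below index `a`, i.e. `F(x_{a-1})`. -/
noncomputable def DiscDist.L (D : DiscDist) (a : ℤ) : ℝ :=
  ∑' i : ℤ, if i < a then D.p i else 0

/-- The relation `a ▷◁ b`: the jump intervals `(F(x_{a-1}), F(x_a))` and
`(G(y_{b-1}), G(y_b))` intersect. -/
def DRel (F G : DiscDist) (a b : ℤ) : Prop :=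
  a ∈ F.A ∧ b ∈ G.A ∧
    max (F.L a) (G.L b) < min (F.L (a + 1)) (G.L (b + 1))

/-- The ∧-discrete dispersive order `F ≼_∧ G`. -/
def discoA (F G : DiscDist) : Prop :=
  (∀ a b, DRel F G a b → G.p b ≤ F.p a) ∧
  (∀ a b, DRel F G a b → DRel F G (a - 1) (b - 1) →
    F.x a - F.x (a - 1) ≤ G.x b - G.x (b - 1))

/-- The ∨-discrete dispersive order `F ≼_∨ G`. -/
def discoO (F G : DiscDist) : Prop :=
  (∀ a b, DRel F G a b → G.p b ≤ F.p a) ∧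
  (∀ a b, a ∈ F.A → a - 1 ∈ F.A → b ∈ G.A → b - 1 ∈ G.A →
    (DRel F G a b ∨ DRel F G (a - 1) (b - 1)) →
    F.x a - F.x (a - 1) ≤ G.x b - G.x (b - 1))

/-- Cumulative distribution function of a discrete distribution. -/
noncomputable def DiscDist.cdf (D : DiscDist) (t : ℝ) : ℝ :=
  ∑' a : ℤ, if D.x a ≤ t then D.p a else 0

/-- Mean of a discrete distribution. -/
noncomputable def DiscDist.mean (D : DiscDist) : ℝ := ∑' a : ℤ, D.p a * D.x a


namespace Stmt14Aux

open Filter Topology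


open Filter Topology

/-- Telescoping sum over `ℤ`. -/
lemma sum_Icc_telescope (f : ℤ → ℝ) (m : ℤ) :
    ∀ n : ℤ, m - 1 ≤ n → ∑ k ∈ Finset.Icc m n, (f (k+1) - f k) = f (n+1) - f m := by
  refine Int.le_induction ?_ ?_
  · have h1 : Finset.Icc m (m-1) = (∅ : Finset ℤ) := Finset.Icc_eq_empty (by omega)
    have h2 : m - 1 + 1 = m := by ring
    rw [h1, h2]; simp
  · intro n hmn ih
    have hins : Finset.Icc m (n+1) = insert (n+1) (Finset.Icc m n) := by
      ext k; simp only [Finset.mem_Icc, Finset.mem_insert]; omega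
    have hnotmem : (n+1) ∉ Finset.Icc m n := by simp [Finset.mem_Icc]
    rw [hins, Finset.sum_insert hnotmem, ih]
    ring

lemma hasSum_telescope_int {f : ℤ → ℝ} (hmono : Monotone f) {lo hi : ℝ}
    (hbot : Tendsto f atBot (𝓝 lo)) (htop : Tendsto f atTop (𝓝 hi)) :
    HasSum (fun n : ℤ => f (n+1) - f n) (hi - lo) := by
  have hnn : ∀ n : ℤ, 0 ≤ f (n+1) - f n := fun n => sub_nonneg.2 (hmono (by omega))
  have flo : ∀ n, lo ≤ f n := fun n =>
    le_of_tendsto hbot (eventually_atBot.2 ⟨n, fun m hm => hmono hm⟩)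
  have fhi : ∀ n, f n ≤ hi := fun n =>
    ge_of_tendsto htop (eventually_atTop.2 ⟨n, fun m hm => hmono hm⟩)
  apply hasSum_of_isLUB_of_nonneg _ hnn
  constructor
  · rintro x ⟨s, rfl⟩
    rcases s.eq_empty_or_nonempty with rfl | hne
    · simpa using sub_nonneg.2 ((flo 0).trans (fhi 0))
    · set m := s.min' hne
      set n := s.max' hne
      have hsub : s ⊆ Finset.Icc m n := by
        intro k hk
        simp only [Finset.mem_Icc]
        exact ⟨s.min'_le k hk, s.le_max' k hk⟩
      calc ∑ k ∈ s, (f (k+1) - f k)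
          ≤ ∑ k ∈ Finset.Icc m n, (f (k+1) - f k) :=
            Finset.sum_le_sum_of_subset_of_nonneg hsub (fun k _ _ => hnn k)
        _ = f (n+1) - f m := sum_Icc_telescope f m n (by
            have : m ≤ n := s.min'_le _ (s.max'_mem hne)
            omega)
        _ ≤ hi - lo := sub_le_sub (fhi _) (flo _)
  · rintro x hx
    by_contra hlt
    push_neg at hlt
    set ε := (hi - lo - x) / 2 with hε
    have hεpos : 0 < ε := by simp only [hε]; linarith
    obtain ⟨n, hn⟩ := (htop.eventually (eventually_gt_nhds (show hi - ε/2 < hi by linarith))).exists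
    obtain ⟨m, hm⟩ := (hbot.eventually (eventually_lt_nhds (show lo < lo + ε/2 by linarith))).exists
    set m' := min m n
    set n' := max m n
    have h1 : f m' ≤ f m := hmono (min_le_left _ _)
    have h2 : f n ≤ f n' := hmono (le_max_right _ _)
    have h3 : f n' ≤ f (n'+1) := hmono (by omega)
    have hkey : x < ∑ k ∈ Finset.Icc m' n', (f (k+1) - f k) := by
      rw [sum_Icc_telescope f m' n' (by have : m' ≤ n' := min_le_max; omega)]
      have : hi - ε/2 < f (n'+1) := lt_of_lt_of_le hn (h2.trans h3)
      have : f m' < lo + ε/2 := lt_of_le_of_lt h1 hm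
      linarith
    exact absurd (hx ⟨Finset.Icc m' n', rfl⟩) (not_le.2 hkey)


section Basic

variable (D : DiscDist)

lemma p_nonneg (a : ℤ) : 0 ≤ D.p a := by
  by_cases h : a ∈ D.A
  · exact (D.hpos a h).le
  · rw [D.hzero a h]

lemma summable_ite (a : ℤ) : Summable (fun i : ℤ => if i < a then D.p i else 0) := by
  apply Summable.of_nonneg_of_le (fun i => ?_) (fun i => ?_) D.hsummable
  · by_cases h : i < a <;> simp [h, p_nonneg]
  · by_cases h : i < a <;> simp [h, p_nonneg]

lemma L_mono : Monotone D.L := by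
  intro a a' haa'
  apply Summable.tsum_le_tsum _ (summable_ite D a) (summable_ite D a')
  intro i
  by_cases h : i < a
  · simp [h, show i < a' by omega]
  · by_cases h' : i < a' <;> simp [h, h', p_nonneg]

lemma L_succ (a : ℤ) : D.L (a + 1) = D.L a + D.p a := by
  have hpt : ∀ i : ℤ, (if i < a + 1 then D.p i else 0) =
      (if i < a then D.p i else 0) + (if i = a then D.p i else 0) := by
    intro i
    by_cases h1 : i < a
    · simp [h1, show i < a + 1 by omega, show i ≠ a by omega]
    · by_cases h2 : i = a
      · simp [h1, h2]
      · simp [h1, h2, show ¬ i < a + 1 by omega]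
  have hs2 : Summable (fun i : ℤ => if i = a then D.p i else 0) := by
    apply summable_of_finite_support
    apply Set.Finite.subset (Set.finite_singleton a)
    intro i hi
    simp only [Function.mem_support] at hi
    by_contra hne
    simp only [Set.mem_singleton_iff] at hne
    simp [hne] at hi
  calc D.L (a+1) = ∑' i : ℤ, ((if i < a then D.p i else 0) + (if i = a then D.p i else 0)) := by
        unfold DiscDist.L; exact tsum_congr hpt
    _ = D.L a + ∑' i : ℤ, (if i = a then D.p i else 0) := Summable.tsum_add (summable_ite D a) hs2
    _ = D.L a + D.p a := by rw [tsum_eq_single a (by intro b hb; simp [hb])]; simp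

lemma L_nonneg (a : ℤ) : 0 ≤ D.L a :=
  tsum_nonneg (fun i => by by_cases h : i < a <;> simp [h, p_nonneg])

lemma L_le_one (a : ℤ) : D.L a ≤ 1 := by
  rw [← D.hsum]
  apply Summable.tsum_le_tsum _ (summable_ite D a) D.hsummable
  intro i; by_cases h : i < a <;> simp [h, p_nonneg]

lemma tendsto_L_atTop : Filter.Tendsto D.L Filter.atTop (𝓝 1) := by
  rw [Metric.tendsto_atTop]
  intro ε hε
  have h1 : HasSum D.p 1 := D.hsum ▸ D.hsummable.hasSum
  obtain ⟨S, hS⟩ := (h1.eventually (Metric.ball_mem_nhds 1 hε)).exists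
  rcases S.eq_empty_or_nonempty with rfl | hne
  · refine ⟨0, fun a _ => ?_⟩
    simp only [Metric.mem_ball, Finset.sum_empty] at hS
    have h2 : dist (D.L a) 1 ≤ dist (0:ℝ) 1 := by
      rw [Real.dist_eq, Real.dist_eq]
      rw [abs_sub_comm, abs_of_nonneg (by linarith [L_le_one D a]),
        abs_sub_comm, abs_of_nonneg (by norm_num)]
      have := L_nonneg D a
      linarith
    exact lt_of_le_of_lt h2 hS
  · refine ⟨S.max' hne + 1, fun a ha => ?_⟩
    have hsum_le : ∑ i ∈ S, D.p i ≤ D.L a := by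
      have : ∑ i ∈ S, D.p i = ∑ i ∈ S, (if i < a then D.p i else 0) := by
        apply Finset.sum_congr rfl
        intro i hi
        have : i < a := by have := S.le_max' i hi; omega
        simp [this]
      rw [this]
      exact Summable.sum_le_tsum S (fun i _ => by by_cases h : i < a <;> simp [h, p_nonneg])
        (summable_ite D a)
    rw [Real.dist_eq, abs_sub_comm, abs_of_nonneg (by linarith [L_le_one D a])]
    simp only [Metric.mem_ball, Real.dist_eq] at hS
    have := abs_lt.1 hS
    linarith
  
lemma tendsto_L_atBot : Filter.Tendsto D.L Filter.atBot (𝓝 0) := by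
  rw [Metric.tendsto_nhds]
  intro ε hε
  have h1 : HasSum D.p 1 := D.hsum ▸ D.hsummable.hasSum
  obtain ⟨S, hS⟩ := (h1.eventually (Metric.ball_mem_nhds 1 hε)).exists
  rcases S.eq_empty_or_nonempty with rfl | hne
  · refine Filter.eventually_atBot.2 ⟨0, fun a _ => ?_⟩
    simp only [Metric.mem_ball, Finset.sum_empty, dist_zero_left] at hS
    rw [Real.dist_eq, sub_zero, abs_of_nonneg (by linarith [L_nonneg D a])]
    calc D.L a ≤ 1 := L_le_one D a
      _ = ‖(1:ℝ)‖ := by norm_num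
      _ < ε := hS
  · refine Filter.eventually_atBot.2 ⟨S.min' hne, fun a ha => ?_⟩
    have hgap : ∑ i ∈ S, D.p i ≤ 1 - D.L a := by
      have hgs : Summable (fun i : ℤ => D.p i - (if i < a then D.p i else 0)) :=
        D.hsummable.sub (summable_ite D a)
      have h2 : ∑ i ∈ S, D.p i = ∑ i ∈ S, (D.p i - (if i < a then D.p i else 0)) := by
        apply Finset.sum_congr rfl
        intro i hi
        have h3 : ¬ i < a := by have := S.min'_le i hi; omega
        simp [h3]
      rw [h2]
      calc ∑ i ∈ S, (D.p i - (if i < a then D.p i else 0))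
          ≤ ∑' i : ℤ, (D.p i - (if i < a then D.p i else 0)) := by
            apply Summable.sum_le_tsum S _ hgs
            intro i _
            by_cases h : i < a <;> simp [h, p_nonneg]
        _ = 1 - D.L a := by
            rw [Summable.tsum_sub D.hsummable (summable_ite D a), D.hsum]; rfl
    rw [Real.dist_eq, sub_zero, abs_of_nonneg (L_nonneg D a)]
    simp only [Metric.mem_ball, Real.dist_eq] at hS
    have := abs_lt.1 hS
    linarith

end Basic


section Coupling

/-- Overlap mass of the probability intervals of `F`-atom `a` and `G`-atom `b`. -/
noncomputable def pp (F G : DiscDist) (a b : ℤ) : ℝ :=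
  max 0 (min (F.L (a+1)) (G.L (b+1)) - max (F.L a) (G.L b))

variable (F G : DiscDist)

lemma pp_nonneg (a b : ℤ) : 0 ≤ pp F G a b := le_max_left _ _

lemma pp_symm (a b : ℤ) : pp F G a b = pp G F b a := by
  unfold pp
  rw [min_comm (F.L (a+1)), max_comm (F.L a)]

lemma clamp_diff (c d u v : ℝ) (hcd : c ≤ d) (huv : u ≤ v) :
    max 0 (min d v - max c u) = max c (min d v) - max c (min d u) := by
  rcases le_or_gt v c with h1 | h1
  · rw [max_eq_left (sub_nonpos.2 ((min_le_right d v).trans (h1.trans (le_max_left c u)))),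
      max_eq_left ((min_le_right d v).trans h1),
      max_eq_left ((min_le_right d u).trans (huv.trans h1))]
    ring
  · rcases le_or_gt d u with h2 | h2
    · rw [min_eq_left (h2.trans huv), min_eq_left h2,
        max_eq_left (sub_nonpos.2 (le_max_of_le_right h2)),
        max_eq_right hcd]
      ring
    · have hmin : min d v = min d v := rfl
      have hge : max c u ≤ min d v := by
        apply max_le (le_min hcd h1.le) (le_min h2.le huv)
      rw [max_eq_right (sub_nonneg.2 hge),
        max_eq_right (le_min hcd h1.le),
        min_eq_right h2.le]

lemma hasSum_pp_b (a : ℤ) : HasSum (fun b => pp F G a b) (F.p a) := by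
  set f : ℤ → ℝ := fun b => max (F.L a) (min (F.L (a+1)) (G.L b)) with hf
  have hLa : F.L a ≤ F.L (a+1) := L_mono F (by omega)
  have hmono : Monotone f := by
    intro b b' hbb'
    exact max_le_max le_rfl (min_le_min le_rfl (L_mono G hbb'))
  have hcont : Continuous (fun t : ℝ => max (F.L a) (min (F.L (a+1)) t)) :=
    continuous_const.max (continuous_const.min continuous_id)
  have htop : Filter.Tendsto f Filter.atTop (𝓝 (F.L (a+1))) := by
    have h1 : Filter.Tendsto f Filter.atTop (𝓝 (max (F.L a) (min (F.L (a+1)) 1))) :=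
      (hcont.tendsto 1).comp (tendsto_L_atTop G)
    rwa [min_eq_left (L_le_one F (a+1)), max_eq_right hLa] at h1
  have hbot : Filter.Tendsto f Filter.atBot (𝓝 (F.L a)) := by
    have h1 : Filter.Tendsto f Filter.atBot (𝓝 (max (F.L a) (min (F.L (a+1)) 0))) :=
      (hcont.tendsto 0).comp (tendsto_L_atBot G)
    rwa [min_eq_right (L_nonneg F (a+1)), max_eq_left (L_nonneg F a)] at h1
  have hkey : (fun b : ℤ => f (b+1) - f b) = fun b => pp F G a b := by
    funext b
    rw [hf]
    simp only
    rw [← clamp_diff (F.L a) (F.L (a+1)) (G.L b) (G.L (b+1)) hLa (L_mono G (by omega))]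
    rfl
  have := hasSum_telescope_int hmono hbot htop
  rw [hkey] at this
  have hp : F.L (a+1) - F.L a = F.p a := by rw [L_succ]; ring
  rwa [hp] at this

lemma hasSum_pp_a (b : ℤ) : HasSum (fun a => pp F G a b) (G.p b) := by
  have h1 := hasSum_pp_b G F b
  have h2 : (fun a => pp F G a b) = (fun a => pp G F b a) :=
    funext fun a => pp_symm F G a b
  rw [h2]
  exact h1

lemma summable_pp_b (a : ℤ) : Summable (fun b => pp F G a b) := (hasSum_pp_b F G a).summable

lemma tsum_pp_b (a : ℤ) : ∑' b, pp F G a b = F.p a := (hasSum_pp_b F G a).tsum_eq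

lemma tsum_pp_a (b : ℤ) : ∑' a, pp F G a b = G.p b := (hasSum_pp_a F G b).tsum_eq

lemma pp_le_q (a b : ℤ) : pp F G a b ≤ G.p b := by
  apply max_le (p_nonneg G b)
  have h1 : min (F.L (a+1)) (G.L (b+1)) ≤ G.L (b+1) := min_le_right _ _
  have h2 : G.L b ≤ max (F.L a) (G.L b) := le_max_right _ _
  have h3 : G.L (b+1) = G.L b + G.p b := L_succ G b
  linarith

lemma pp_le_p (a b : ℤ) : pp F G a b ≤ F.p a := by
  rw [pp_symm]; exact pp_le_q G F b a

lemma DRel_of_pp_pos {a b : ℤ} (h : 0 < pp F G a b) : DRel F G a b := by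
  have hlt : max (F.L a) (G.L b) < min (F.L (a+1)) (G.L (b+1)) := by
    by_contra hc
    push_neg at hc
    have : pp F G a b = 0 := max_eq_left (sub_nonpos.2 hc)
    rw [this] at h; exact lt_irrefl 0 h
  refine ⟨?_, ?_, hlt⟩
  · by_contra hA
    have hp0 : F.p a = 0 := F.hzero a hA
    have : F.L (a+1) = F.L a := by rw [L_succ, hp0]; ring
    have h1 : min (F.L (a+1)) (G.L (b+1)) ≤ F.L (a+1) := min_le_left _ _
    have h2 : F.L a ≤ max (F.L a) (G.L b) := le_max_left _ _
    linarith
  · by_contra hB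
    have hq0 : G.p b = 0 := G.hzero b hB
    have : G.L (b+1) = G.L b := by rw [L_succ, hq0]; ring
    have h1 : min (F.L (a+1)) (G.L (b+1)) ≤ G.L (b+1) := min_le_right _ _
    have h2 : G.L b ≤ max (F.L a) (G.L b) := le_max_right _ _
    linarith

lemma pp_pos_max_lt_min {a b : ℤ} (h : 0 < pp F G a b) :
    max (F.L a) (G.L b) < min (F.L (a+1)) (G.L (b+1)) :=
  (DRel_of_pp_pos F G h).2.2

lemma comono {a b a' b' : ℤ} (h : 0 < pp F G a b) (h' : 0 < pp F G a' b')
    (haa' : a < a') : b ≤ b' := by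
  by_contra hc
  push_neg at hc
  have h1 := pp_pos_max_lt_min F G h
  have h2 := pp_pos_max_lt_min F G h'
  have h3 : G.L b < F.L (a+1) :=
    lt_of_le_of_lt (le_max_right _ _) (lt_of_lt_of_le h1 (min_le_left _ _))
  have h4 : F.L a' < G.L (b'+1) :=
    lt_of_le_of_lt (le_max_left _ _) (lt_of_lt_of_le h2 (min_le_right _ _))
  have h5 : F.L (a+1) ≤ F.L a' := L_mono F (by omega)
  have h6 : G.L (b'+1) ≤ G.L b := L_mono G (by omega)
  linarith

lemma contig {a b b' b'' : ℤ} (h : 0 < pp F G a b) (h' : 0 < pp F G a b')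
    (h1 : b ≤ b'') (h2 : b'' ≤ b') (hB : b'' ∈ G.A) : 0 < pp F G a b'' := by
  have ha := pp_pos_max_lt_min F G h
  have ha' := pp_pos_max_lt_min F G h'
  have e1 : F.L a < F.L (a+1) :=
    lt_of_le_of_lt (le_max_left _ _) (lt_of_lt_of_le ha (min_le_left _ _))
  have e2 : F.L a < G.L (b+1) :=
    lt_of_le_of_lt (le_max_left _ _) (lt_of_lt_of_le ha (min_le_right _ _))
  have e3 : G.L b' < F.L (a+1) :=
    lt_of_le_of_lt (le_max_right _ _) (lt_of_lt_of_le ha' (min_le_left _ _))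
  have e4 : G.L (b+1) ≤ G.L (b''+1) := L_mono G (by omega)
  have e5 : G.L b'' ≤ G.L b' := L_mono G h2
  have e6 : G.L b'' < G.L (b''+1) := by
    rw [L_succ]; linarith [G.hpos b'' hB]
  unfold pp
  apply lt_max_iff.mpr
  right
  rw [sub_pos]
  exact max_lt (lt_min e1 (lt_of_lt_of_le e2 e4)) (lt_min (lt_of_le_of_lt e5 e3) e6)

end Coupling


section Step

variable (F G : DiscDist)

lemma xmono (D : DiscDist) {a a' : ℤ} (ha : a ∈ D.A) (ha' : a' ∈ D.A) (hle : a ≤ a') :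
    D.x a ≤ D.x a' := by
  rcases eq_or_lt_of_le hle with rfl | hlt
  · exact le_refl _
  · exact (D.hmono a a' ha ha' hlt).le

lemma summable_ite_eq (β : ℤ) (c : ℝ) : Summable (fun b : ℤ => if b = β then c else 0) := by
  apply summable_of_finite_support
  apply Set.Finite.subset (Set.finite_singleton β)
  intro i hi
  simp only [Function.mem_support] at hi
  by_contra hne
  simp only [Set.mem_singleton_iff] at hne
  simp [hne] at hi

lemma tsum_ite_eq' (β : ℤ) (c : ℝ) : ∑' b : ℤ, (if b = β then c else 0) = c := by
  rw [tsum_eq_single β (fun b hb => if_neg hb)]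
  simp

/-- Centered `y`-values. -/
noncomputable def ytf (G : DiscDist) (b : ℤ) : ℝ := G.x b - G.mean

/-- Centered `x`-values. -/
noncomputable def xtf (F : DiscDist) (a : ℤ) : ℝ := F.x a - F.mean

lemma ytf_mono {b b' : ℤ} (hb : b ∈ G.A) (hb' : b' ∈ G.A) (hle : b ≤ b') :
    ytf G b ≤ ytf G b' := by
  unfold ytf
  have := xmono G hb hb' hle
  linarith

lemma summable_abs_yt (hG : Summable fun b => G.p b * |G.x b|) :
    Summable (fun b => G.p b * |ytf G b|) := by
  apply Summable.of_nonneg_of_le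
    (fun b => mul_nonneg (p_nonneg G b) (abs_nonneg _))
    (fun b => ?_) (hG.add (G.hsummable.mul_right |G.mean|))
  unfold ytf
  calc G.p b * |G.x b - G.mean| ≤ G.p b * (|G.x b| + |G.mean|) := by
        apply mul_le_mul_of_nonneg_left _ (p_nonneg G b)
        exact abs_sub _ _
    _ = G.p b * |G.x b| + G.p b * |G.mean| := by ring

lemma summable_pp_yt (hG : Summable fun b => G.p b * |G.x b|) (a : ℤ) :
    Summable (fun b => pp F G a b * ytf G b) := by
  apply Summable.of_abs
  apply Summable.of_nonneg_of_le (fun b => abs_nonneg _) (fun b => ?_) (summable_abs_yt G hG)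
  rw [abs_mul, abs_of_nonneg (pp_nonneg F G a b)]
  exact mul_le_mul_of_nonneg_right (pp_le_q F G a b) (abs_nonneg _)

/-- Block "mass times conditional mean" of the centered `G` values over `F`-atom `a`. -/
noncomputable def Mblock (F G : DiscDist) (a : ℤ) : ℝ := ∑' b, pp F G a b * ytf G b

/-- `p_a` times (conditional mean of centered `Y` minus centered `x_a`). -/
noncomputable def Dp (F G : DiscDist) (a : ℤ) : ℝ := Mblock F G a - F.p a * xtf F a

lemma spacing (h : discoA F G) {a b : ℤ} (h1 : 0 < pp F G (a+1) (b+1)) (h2 : 0 < pp F G a b) :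
    F.x (a+1) - F.x a ≤ G.x (b+1) - G.x b := by
  have hd1 := DRel_of_pp_pos F G h1
  have hd2 := DRel_of_pp_pos F G h2
  have e1 : a + 1 - 1 = a := by ring
  have e2 : b + 1 - 1 = b := by ring
  have := h.2 (a+1) (b+1) hd1 (by rw [e1, e2]; exact hd2)
  rwa [e1, e2] at this

lemma exists_block_atom {a : ℤ} (ha : a ∈ F.A) : ∃ b, 0 < pp F G a b := by
  by_contra hc
  push_neg at hc
  have hz : ∀ b, pp F G a b = 0 := fun b => le_antisymm (hc b) (pp_nonneg F G a b)
  have h1 := tsum_pp_b F G a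
  rw [tsum_congr hz, tsum_zero] at h1
  exact absurd h1.symm (ne_of_gt (F.hpos a ha))

lemma exists_least_block_atom {a : ℤ} (ha : a ∈ F.A) (ha1 : a + 1 ∈ F.A) :
    ∃ β, 0 < pp F G (a+1) β ∧ ∀ b, 0 < pp F G (a+1) b → β ≤ b := by
  have hLpos : (0:ℝ) < F.L (a+1) := by
    rw [L_succ]
    have := L_nonneg F a
    have := F.hpos a ha
    linarith
  have hev : ∀ᶠ b in Filter.atBot, G.L b < F.L (a+1) :=
    (tendsto_L_atBot G).eventually (eventually_lt_nhds hLpos)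
  obtain ⟨N, hN⟩ := Filter.eventually_atBot.1 hev
  apply Int.exists_least_of_bdd (Hbdd := ⟨N - 1, ?_⟩) (Hinh := exists_block_atom F G ha1)
  intro z hz
  by_contra hzc
  push_neg at hzc
  have h1 : G.L (z+1) < F.L (a+1) := hN (z+1) (by omega)
  have h2 := pp_pos_max_lt_min F G hz
  have h3 : F.L (a+1) < G.L (z+1) :=
    lt_of_le_of_lt (le_max_left _ _) (lt_of_lt_of_le h2 (min_le_right _ _))
  linarith

lemma step (h : discoA F G) (hG : Summable fun b => G.p b * |G.x b|) {a : ℤ}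
    (ha : a ∈ F.A) (ha1 : a + 1 ∈ F.A) (hD : 0 ≤ Dp F G a) : 0 ≤ Dp F G (a+1) := by
  classical
  have hpa : 0 < F.p a := F.hpos a ha
  have hpa1 : 0 < F.p (a+1) := F.hpos _ ha1
  obtain ⟨β, hβpos, hβleast⟩ := exists_least_block_atom F G ha ha1
  have hβA : β ∈ G.A := (DRel_of_pp_pos F G hβpos).2.1
  have hblocka : ∀ b, 0 < pp F G a b → b ≤ β := fun b hb => comono F G hb hβpos (by omega)
  have hmemA : ∀ b, 0 < pp F G a b → b ∈ G.A := fun b hb => (DRel_of_pp_pos F G hb).2.1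
  have hmemA1 : ∀ b, 0 < pp F G (a+1) b → b ∈ G.A := fun b hb => (DRel_of_pp_pos F G hb).2.1
  have hsum_yt : ∀ a', Summable (fun b => pp F G a' b * ytf G b) :=
    fun a' => summable_pp_yt F G hG a'
  have hγpos : 0 < F.x (a+1) - F.x a := by
    have := F.hmono a (a+1) ha ha1 (by omega)
    linarith
  have hxdiff : xtf F (a+1) = xtf F a + (F.x (a+1) - F.x a) := by unfold xtf; ring
  have hDa : F.p a * xtf F a ≤ Mblock F G a := by
    unfold Dp at hD
    linarith
  by_cases hsplit : 0 < pp F G a β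
  · -- SPLIT case
    have hsupp : ∀ a' : ℤ, a' ≠ a → a' ≠ a + 1 → pp F G a' β = 0 := by
      intro a' hne1 hne2
      by_contra hc
      have hpos' : 0 < pp F G a' β :=
        lt_of_le_of_ne (pp_nonneg F G a' β) (fun hh => hc hh.symm)
      have hm' := pp_pos_max_lt_min F G hpos'
      rcases lt_or_gt_of_ne hne1 with hlt | hgt
      · have h1 : G.L β < F.L (a'+1) :=
          lt_of_le_of_lt (le_max_right _ _) (lt_of_lt_of_le hm' (min_le_left _ _))
        have h2 : F.L (a'+1) ≤ F.L a := L_mono F (by omega)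
        have h3 : F.L (a+1) < G.L (β+1) := by
          have hm := pp_pos_max_lt_min F G hβpos
          exact lt_of_le_of_lt (le_max_left _ _) (lt_of_lt_of_le hm (min_le_right _ _))
        have h4 : G.p β ≤ F.p a := h.1 a β (DRel_of_pp_pos F G hsplit)
        have h5 : F.L (a+1) = F.L a + F.p a := L_succ F a
        have h6 : G.L (β+1) = G.L β + G.p β := L_succ G β
        linarith
      · have h1 : G.L β < F.L (a+1) := by
          have hm := pp_pos_max_lt_min F G hsplit
          exact lt_of_le_of_lt (le_max_right _ _) (lt_of_lt_of_le hm (min_le_left _ _))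
        have h2 : F.L (a+1+1) ≤ F.L a' := L_mono F (by omega)
        have h3 : F.L a' < G.L (β+1) :=
          lt_of_le_of_lt (le_max_left _ _) (lt_of_lt_of_le hm' (min_le_right _ _))
        have h4 : G.p β ≤ F.p (a+1) := h.1 (a+1) β (DRel_of_pp_pos F G hβpos)
        have h5 : F.L (a+1+1) = F.L (a+1) + F.p (a+1) := L_succ F (a+1)
        have h6 : G.L (β+1) = G.L β + G.p β := L_succ G β
        linarith
    have hqβ : G.p β = pp F G a β + pp F G (a+1) β := by
      have h1 := tsum_pp_a F G β
      have h2 : ∑' a', pp F G a' β = ∑ a' ∈ ({a, a+1} : Finset ℤ), pp F G a' β := by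
        apply tsum_eq_sum
        intro a' ha'
        simp only [Finset.mem_insert, Finset.mem_singleton] at ha'
        push_neg at ha'
        exact hsupp a' ha'.1 ha'.2
      rw [h2, Finset.sum_pair (by omega : a ≠ a + 1)] at h1
      linarith
    have hq_pa : pp F G a β + pp F G (a+1) β ≤ F.p a := by
      have h4 := h.1 a β (DRel_of_pp_pos F G hsplit)
      rw [hqβ] at h4
      exact h4
    have hq_pa1 : pp F G a β + pp F G (a+1) β ≤ F.p (a+1) := by
      have h4 := h.1 (a+1) β (DRel_of_pp_pos F G hβpos)
      rw [hqβ] at h4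
      exact h4
    -- block a has an atom other than β
    have hex_b' : ∃ b', b' ≠ β ∧ 0 < pp F G a b' := by
      by_contra hc
      push_neg at hc
      have hz : ∀ b', b' ≠ β → pp F G a b' = 0 := by
        intro b' hb'
        rcases lt_or_eq_of_le (pp_nonneg F G a b') with hpos | heq
        · exact absurd hpos (by simpa using hc b' hb')
        · exact heq.symm
      have h1 := tsum_pp_b F G a
      rw [tsum_eq_single β hz] at h1
      linarith
    obtain ⟨b', hb'ne, hb'pos⟩ := hex_b'
    have hb'le : b' ≤ β - 1 := by
      have := hblocka b' hb'pos
      omega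
    have hb'A : b' ∈ G.A := hmemA b' hb'pos
    have hβ1A : β - 1 ∈ G.A := G.hAconn b' (β-1) β hb'A hβA (by omega) (by omega)
    have hppaβ1 : 0 < pp F G a (β-1) := contig F G hb'pos hsplit (by omega) (by omega) hβ1A
    -- block a+1 has an atom other than β
    have hex_b'' : ∃ b'', b'' ≠ β ∧ 0 < pp F G (a+1) b'' := by
      by_contra hc
      push_neg at hc
      have hz : ∀ b'', b'' ≠ β → pp F G (a+1) b'' = 0 := by
        intro b'' hb''
        rcases lt_or_eq_of_le (pp_nonneg F G (a+1) b'') with hpos | heq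
        · exact absurd hpos (by simpa using hc b'' hb'')
        · exact heq.symm
      have h1 := tsum_pp_b F G (a+1)
      rw [tsum_eq_single β hz] at h1
      linarith
    obtain ⟨b'', hb''ne, hb''pos⟩ := hex_b''
    have hb''ge : β + 1 ≤ b'' := by
      have := hβleast b'' hb''pos
      omega
    have hb''A : b'' ∈ G.A := hmemA1 b'' hb''pos
    have hβp1A : β + 1 ∈ G.A := G.hAconn β (β+1) b'' hβA hb''A (by omega) (by omega)
    have hpp1β1 : 0 < pp F G (a+1) (β+1) := contig F G hβpos hb''pos (by omega) (by omega) hβp1A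
    -- spacings
    have sp1 : F.x (a+1) - F.x a ≤ G.x β - G.x (β-1) := by
      have h1 : 0 < pp F G (a+1) ((β-1)+1) := by
        rw [show β - 1 + 1 = β by ring]; exact hβpos
      have := spacing F G h h1 hppaβ1
      rwa [show β - 1 + 1 = β by ring] at this
    have sp2 : F.x (a+1) - F.x a ≤ G.x (β+1) - G.x β := spacing F G h hpp1β1 hsplit
    have sp1' : F.x (a+1) - F.x a ≤ ytf G β - ytf G (β-1) := by unfold ytf; linarith
    have sp2' : F.x (a+1) - F.x a ≤ ytf G (β+1) - ytf G β := by unfold ytf; linarith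
    -- upper bound for Mblock a
    have hub : Mblock F G a ≤ F.p a * ytf G (β-1) + pp F G a β * (ytf G β - ytf G (β-1)) := by
      have hple : ∀ b, pp F G a b * ytf G b ≤
          pp F G a b * ytf G (β-1) + (if b = β then pp F G a β * (ytf G β - ytf G (β-1)) else 0) := by
        intro b
        by_cases hb : b = β
        · subst hb
          rw [if_pos rfl]
          apply le_of_eq
          ring
        · rw [if_neg hb, add_zero]
          rcases lt_or_eq_of_le (pp_nonneg F G a b) with hpos | heq
          · have hle : b ≤ β - 1 := by
              have := hblocka b hpos
              omega
            exact mul_le_mul_of_nonneg_left (ytf_mono G (hmemA b hpos) hβ1A hle) hpos.le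
          · rw [← heq]; simp
      calc Mblock F G a ≤ ∑' b, (pp F G a b * ytf G (β-1) +
            (if b = β then pp F G a β * (ytf G β - ytf G (β-1)) else 0)) := by
            apply Summable.tsum_le_tsum hple (hsum_yt a)
            exact ((summable_pp_b F G a).mul_right _).add (summable_ite_eq β _)
        _ = F.p a * ytf G (β-1) + pp F G a β * (ytf G β - ytf G (β-1)) := by
            rw [Summable.tsum_add ((summable_pp_b F G a).mul_right _) (summable_ite_eq β _),
              tsum_mul_right, tsum_pp_b, tsum_ite_eq']
    -- lower bound for Mblock (a+1)
    have hlb : F.p (a+1) * ytf G (β+1) + pp F G (a+1) β * (ytf G β - ytf G (β+1))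
        ≤ Mblock F G (a+1) := by
      have hple : ∀ b, pp F G (a+1) b * ytf G (β+1) +
          (if b = β then pp F G (a+1) β * (ytf G β - ytf G (β+1)) else 0)
          ≤ pp F G (a+1) b * ytf G b := by
        intro b
        by_cases hb : b = β
        · subst hb
          rw [if_pos rfl]
          apply le_of_eq
          ring
        · rw [if_neg hb, add_zero]
          rcases lt_or_eq_of_le (pp_nonneg F G (a+1) b) with hpos | heq
          · have hge : β + 1 ≤ b := by
              have := hβleast b hpos
              omega
            exact mul_le_mul_of_nonneg_left (ytf_mono G hβp1A (hmemA1 b hpos) hge) hpos.le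
          · rw [← heq]; simp
      calc F.p (a+1) * ytf G (β+1) + pp F G (a+1) β * (ytf G β - ytf G (β+1))
          = ∑' b, (pp F G (a+1) b * ytf G (β+1) +
            (if b = β then pp F G (a+1) β * (ytf G β - ytf G (β+1)) else 0)) := by
            rw [Summable.tsum_add ((summable_pp_b F G (a+1)).mul_right _) (summable_ite_eq β _),
              tsum_mul_right, tsum_pp_b, tsum_ite_eq']
        _ ≤ Mblock F G (a+1) := by
            apply Summable.tsum_le_tsum hple
              (((summable_pp_b F G (a+1)).mul_right _).add (summable_ite_eq β _))
              (hsum_yt (a+1))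
    -- algebra
    have hws_le : pp F G a β ≤ F.p a := pp_le_p F G a β
    have hws_nn : 0 ≤ pp F G a β := pp_nonneg F G a β
    have hwt_nn : 0 ≤ pp F G (a+1) β := pp_nonneg F G (a+1) β
    have key1 : (F.p a - pp F G a β) * (F.x (a+1) - F.x a)
        ≤ F.p a * (ytf G β - xtf F a) := by
      have h2 : (F.p a - pp F G a β) * (F.x (a+1) - F.x a)
          ≤ (F.p a - pp F G a β) * (ytf G β - ytf G (β-1)) :=
        mul_le_mul_of_nonneg_left sp1' (by linarith)
      have e2 : (F.p a - pp F G a β) * (ytf G β - ytf G (β-1))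
          = F.p a * ytf G β - (F.p a * ytf G (β-1) + pp F G a β * (ytf G β - ytf G (β-1))) := by
        ring
      have e4 : F.p a * (ytf G β - xtf F a) = F.p a * ytf G β - F.p a * xtf F a := by ring
      linarith [hDa, hub]
    have key2 : F.p (a+1) * (ytf G β - xtf F a) - pp F G (a+1) β * (F.x (a+1) - F.x a)
        ≤ Dp F G (a+1) := by
      have h1 : Dp F G (a+1) = Mblock F G (a+1) - F.p (a+1) * xtf F (a+1) := rfl
      have h3 : (F.p (a+1) - pp F G (a+1) β) * (F.x (a+1) - F.x a)
          ≤ (F.p (a+1) - pp F G (a+1) β) * (ytf G (β+1) - ytf G β) :=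
        mul_le_mul_of_nonneg_left sp2' (by linarith)
      have e1 : (F.p (a+1) - pp F G (a+1) β) * (F.x (a+1) - F.x a)
          = F.p (a+1) * (F.x (a+1) - F.x a) - pp F G (a+1) β * (F.x (a+1) - F.x a) := by ring
      have e2 : (F.p (a+1) - pp F G (a+1) β) * (ytf G (β+1) - ytf G β)
          = (F.p (a+1) * ytf G (β+1) + pp F G (a+1) β * (ytf G β - ytf G (β+1)))
            - F.p (a+1) * ytf G β := by ring
      have e3 : F.p (a+1) * xtf F (a+1)
          = F.p (a+1) * xtf F a + F.p (a+1) * (F.x (a+1) - F.x a) := by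
        rw [hxdiff]; ring
      have e4 : F.p (a+1) * (ytf G β - xtf F a)
          = F.p (a+1) * ytf G β - F.p (a+1) * xtf F a := by ring
      linarith [hlb]
    have key3 : 0 ≤ F.p (a+1) * (F.p a - pp F G a β) - F.p a * pp F G (a+1) β := by
      rcases le_total (F.p a) (F.p (a+1)) with hle | hle
      · have t1 : F.p a * pp F G (a+1) β ≤ F.p a * (F.p a - pp F G a β) :=
          mul_le_mul_of_nonneg_left (by linarith) hpa.le
        have t2 : F.p a * (F.p a - pp F G a β) ≤ F.p (a+1) * (F.p a - pp F G a β) :=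
          mul_le_mul_of_nonneg_right hle (by linarith)
        linarith
      · have t1 : F.p a * pp F G (a+1) β ≤ F.p a * (F.p (a+1) - pp F G a β) :=
          mul_le_mul_of_nonneg_left (by linarith) hpa.le
        have t2 : F.p (a+1) * pp F G a β ≤ F.p a * pp F G a β :=
          mul_le_mul_of_nonneg_right hle hws_nn
        have e1 : F.p a * (F.p (a+1) - pp F G a β)
            = F.p (a+1) * F.p a - F.p a * pp F G a β := by ring
        have e2 : F.p (a+1) * (F.p a - pp F G a β)
            = F.p (a+1) * F.p a - F.p (a+1) * pp F G a β := by ring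
        linarith
    have key4 : 0 ≤ F.p a * Dp F G (a+1) := by
      have m1 : F.p a * (F.p (a+1) * (ytf G β - xtf F a)
            - pp F G (a+1) β * (F.x (a+1) - F.x a)) ≤ F.p a * Dp F G (a+1) :=
        mul_le_mul_of_nonneg_left key2 hpa.le
      have m2 : F.p (a+1) * ((F.p a - pp F G a β) * (F.x (a+1) - F.x a))
          ≤ F.p (a+1) * (F.p a * (ytf G β - xtf F a)) :=
        mul_le_mul_of_nonneg_left key1 hpa1.le
      have m3 : 0 ≤ (F.p (a+1) * (F.p a - pp F G a β) - F.p a * pp F G (a+1) β)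
          * (F.x (a+1) - F.x a) := mul_nonneg key3 hγpos.le
      have e1 : F.p a * (F.p (a+1) * (ytf G β - xtf F a)
            - pp F G (a+1) β * (F.x (a+1) - F.x a))
          = F.p (a+1) * (F.p a * (ytf G β - xtf F a))
            - (F.p a * pp F G (a+1) β) * (F.x (a+1) - F.x a) := by ring
      have e3 : (F.p (a+1) * (F.p a - pp F G a β) - F.p a * pp F G (a+1) β)
            * (F.x (a+1) - F.x a)
          = F.p (a+1) * ((F.p a - pp F G a β) * (F.x (a+1) - F.x a))
            - (F.p a * pp F G (a+1) β) * (F.x (a+1) - F.x a) := by ring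
      linarith
    by_contra hneg
    push_neg at hneg
    have := mul_neg_of_pos_of_neg hpa hneg
    linarith
  · -- ALIGNED case
    have hppaβ : pp F G a β = 0 := le_antisymm (not_lt.1 hsplit) (pp_nonneg F G a β)
    obtain ⟨b1, hb1pos⟩ := exists_block_atom F G ha
    have hb1le : b1 ≤ β - 1 := by
      have h1 := hblocka b1 hb1pos
      have h2 : b1 ≠ β := by
        intro hh
        rw [hh] at hb1pos
        exact absurd hppaβ (ne_of_gt hb1pos)
      omega
    have hb1A : b1 ∈ G.A := hmemA b1 hb1pos
    have hβ1A : β - 1 ∈ G.A := G.hAconn b1 (β-1) β hb1A hβA (by omega) (by omega)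
    have hm := pp_pos_max_lt_min F G hβpos
    have hFa1_lt : F.L (a+1) < G.L (β+1) :=
      lt_of_le_of_lt (le_max_left _ _) (lt_of_lt_of_le hm (min_le_right _ _))
    have hLa : F.L a < F.L (a+1) := by
      rw [L_succ]; linarith
    have hGLβ : F.L (a+1) ≤ G.L β := by
      by_contra hc
      push_neg at hc
      have h1 : 0 < pp F G a β := by
        unfold pp
        apply lt_max_iff.mpr
        right
        rw [sub_pos]
        apply max_lt (lt_min hLa (lt_trans hLa hFa1_lt))
        apply lt_min hc
        rw [L_succ]
        linarith [G.hpos β hβA]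
      exact absurd h1 hsplit
    have hGLβ1 : G.L (β-1) < F.L (a+1) := by
      by_contra hc
      push_neg at hc
      have hq1 : 0 < G.p (β-1) := G.hpos _ hβ1A
      have hGLββ : G.L (β-1) < G.L β := by
        have h5 := L_succ G (β-1)
        rw [show β - 1 + 1 = β by ring] at h5
        linarith
      have hGβa2 : G.L β < F.L (a+1+1) :=
        lt_of_le_of_lt (le_max_right _ _) (lt_of_lt_of_le hm (min_le_left _ _))
      have hFa2 : F.L (a+1) < F.L (a+1+1) := by
        rw [L_succ F (a+1)]
        linarith
      have h1 : 0 < pp F G (a+1) (β-1) := by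
        unfold pp
        apply lt_max_iff.mpr
        right
        rw [sub_pos]
        rw [show β - 1 + 1 = β by ring]
        apply max_lt
        · exact lt_min hFa2 (lt_of_le_of_lt hc hGLββ)
        · exact lt_min (lt_of_lt_of_le hGLββ hGβa2.le) hGLββ
      have := hβleast (β-1) h1
      omega
    have hppaβ1 : 0 < pp F G a (β-1) := by
      unfold pp
      apply lt_max_iff.mpr
      right
      rw [sub_pos]
      rw [show β - 1 + 1 = β by ring]
      apply max_lt
      · exact lt_min hLa (lt_of_lt_of_le hLa hGLβ)
      · apply lt_min hGLβ1
        have h5 := L_succ G (β-1)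
        rw [show β - 1 + 1 = β by ring] at h5
        linarith [G.hpos _ hβ1A]
    have sp1 : F.x (a+1) - F.x a ≤ G.x β - G.x (β-1) := by
      have h1 : 0 < pp F G (a+1) ((β-1)+1) := by
        rw [show β - 1 + 1 = β by ring]; exact hβpos
      have := spacing F G h h1 hppaβ1
      rwa [show β - 1 + 1 = β by ring] at this
    have sp1' : F.x (a+1) - F.x a ≤ ytf G β - ytf G (β-1) := by unfold ytf; linarith
    have hub : Mblock F G a ≤ F.p a * ytf G (β-1) := by
      have hple : ∀ b, pp F G a b * ytf G b ≤ pp F G a b * ytf G (β-1) := by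
        intro b
        rcases lt_or_eq_of_le (pp_nonneg F G a b) with hpos | heq
        · have h2 : b ≠ β := by
            intro hh
            rw [hh] at hpos
            exact absurd hppaβ (ne_of_gt hpos)
          have hle : b ≤ β - 1 := by
            have := hblocka b hpos
            omega
          exact mul_le_mul_of_nonneg_left (ytf_mono G (hmemA b hpos) hβ1A hle) hpos.le
        · rw [← heq]; simp
      calc Mblock F G a ≤ ∑' b, pp F G a b * ytf G (β-1) :=
            Summable.tsum_le_tsum hple (hsum_yt a) ((summable_pp_b F G a).mul_right _)
        _ = F.p a * ytf G (β-1) := by rw [tsum_mul_right, tsum_pp_b]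
    have hlb : F.p (a+1) * ytf G β ≤ Mblock F G (a+1) := by
      have hple : ∀ b, pp F G (a+1) b * ytf G β ≤ pp F G (a+1) b * ytf G b := by
        intro b
        rcases lt_or_eq_of_le (pp_nonneg F G (a+1) b) with hpos | heq
        · exact mul_le_mul_of_nonneg_left
            (ytf_mono G hβA (hmemA1 b hpos) (hβleast b hpos)) hpos.le
        · rw [← heq]; simp
      calc F.p (a+1) * ytf G β = ∑' b, pp F G (a+1) b * ytf G β := by
            rw [tsum_mul_right, tsum_pp_b]
        _ ≤ Mblock F G (a+1) :=
            Summable.tsum_le_tsum hple ((summable_pp_b F G (a+1)).mul_right _) (hsum_yt (a+1))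
    have hxt1 : xtf F a ≤ ytf G (β-1) := by
      have h1 : F.p a * xtf F a ≤ F.p a * ytf G (β-1) := le_trans hDa hub
      exact le_of_mul_le_mul_left h1 hpa
    have h2 : xtf F (a+1) ≤ ytf G β := by
      rw [hxdiff]
      linarith
    have h3 : Dp F G (a+1) = Mblock F G (a+1) - F.p (a+1) * xtf F (a+1) := rfl
    rw [h3]
    have h4 : F.p (a+1) * xtf F (a+1) ≤ F.p (a+1) * ytf G β :=
      mul_le_mul_of_nonneg_left h2 hpa1.le
    linarith

end Step


section Convex

variable {φ : ℝ → ℝ}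

/-- Subgradient selection: infimum of right slopes. -/
noncomputable def gsl (φ : ℝ → ℝ) (w : ℝ) : ℝ :=
  sInf ((fun z => (φ z - φ w) / (z - w)) '' Set.Ioi w)

lemma slope_adj (hφ : ConvexOn ℝ Set.univ φ) {x y z : ℝ} (hxy : x < y) (hyz : y < z) :
    (φ y - φ x) / (y - x) ≤ (φ z - φ y) / (z - y) :=
  hφ.slope_mono_adjacent (Set.mem_univ x) (Set.mem_univ z) hxy hyz

lemma gsl_set_nonempty (w : ℝ) :
    ((fun z => (φ z - φ w) / (z - w)) '' Set.Ioi w).Nonempty :=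
  ⟨_, ⟨w + 1, by simp, rfl⟩⟩

lemma gsl_set_bddBelow (hφ : ConvexOn ℝ Set.univ φ) (w : ℝ) :
    BddBelow ((fun z => (φ z - φ w) / (z - w)) '' Set.Ioi w) := by
  refine ⟨(φ w - φ (w - 1)) / (w - (w - 1)), ?_⟩
  rintro _ ⟨z, hz, rfl⟩
  exact slope_adj hφ (by linarith) hz

lemma gsl_le_slope (hφ : ConvexOn ℝ Set.univ φ) {w z : ℝ} (hz : w < z) :
    gsl φ w ≤ (φ z - φ w) / (z - w) :=
  csInf_le (gsl_set_bddBelow hφ w) ⟨z, hz, rfl⟩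

lemma slope_le_gsl (hφ : ConvexOn ℝ Set.univ φ) {v w : ℝ} (hv : v < w) :
    (φ w - φ v) / (w - v) ≤ gsl φ w := by
  apply le_csInf (gsl_set_nonempty w)
  rintro _ ⟨z, hz, rfl⟩
  exact slope_adj hφ hv hz

lemma gsl_subgrad (hφ : ConvexOn ℝ Set.univ φ) (w v : ℝ) :
    φ w + gsl φ w * (v - w) ≤ φ v := by
  rcases lt_trichotomy v w with hlt | rfl | hgt
  · have h1 := slope_le_gsl hφ hlt
    have h2 : 0 < w - v := by linarith
    have h3 : φ w - φ v ≤ gsl φ w * (w - v) := by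
      rw [div_le_iff₀ h2] at h1
      linarith
    have e : gsl φ w * (v - w) = -(gsl φ w * (w - v)) := by ring
    linarith
  · simp
  · have h1 := gsl_le_slope hφ hgt
    have h2 : 0 < v - w := by linarith
    have h3 : gsl φ w * (v - w) ≤ φ v - φ w := by
      rw [le_div_iff₀ h2] at h1
      linarith
    linarith

lemma gsl_mono (hφ : ConvexOn ℝ Set.univ φ) {v w : ℝ} (hvw : v ≤ w) :
    gsl φ v ≤ gsl φ w := by
  rcases eq_or_lt_of_le hvw with rfl | hlt
  · exact le_refl _
  · exact (gsl_le_slope hφ hlt).trans (slope_le_gsl hφ hlt)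

end Convex

section Sums

variable (F G : DiscDist)

lemma summable_pp_g {g : ℤ → ℝ} (hg : Summable fun b => G.p b * |g b|) (a : ℤ) :
    Summable (fun b => pp F G a b * g b) := by
  apply Summable.of_abs
  apply Summable.of_nonneg_of_le (fun b => abs_nonneg _) (fun b => ?_) hg
  rw [abs_mul, abs_of_nonneg (pp_nonneg F G a b)]
  exact mul_le_mul_of_nonneg_right (pp_le_q F G a b) (abs_nonneg _)

lemma summable_abs_prod {g : ℤ → ℝ} (hg : Summable fun b => G.p b * |g b|) :
    Summable (fun z : ℤ × ℤ => |pp F G z.2 z.1 * g z.1|) := by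
  rw [summable_prod_of_nonneg (fun z => abs_nonneg _)]
  constructor
  · intro b
    apply Summable.of_nonneg_of_le (fun a => abs_nonneg _) (fun a => ?_)
      ((hasSum_pp_a F G b).summable.mul_right |g b|)
    rw [abs_mul, abs_of_nonneg (pp_nonneg F G a b)]
  · apply Summable.of_nonneg_of_le (fun b => tsum_nonneg (fun a => abs_nonneg _))
      (fun b => ?_) hg
    have h1 : ∀ a : ℤ, |pp F G a b * g b| = pp F G a b * |g b| := by
      intro a
      rw [abs_mul, abs_of_nonneg (pp_nonneg F G a b)]
    rw [tsum_congr h1, tsum_mul_right, tsum_pp_a]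

lemma fubini_pp {g : ℤ → ℝ} (hg : Summable fun b => G.p b * |g b|) :
    ∑' a, (∑' b, pp F G a b * g b) = ∑' b, G.p b * g b := by
  have habs := summable_abs_prod F G hg
  have hu : Summable (fun z : ℤ × ℤ => pp F G z.2 z.1 * g z.1) := Summable.of_abs habs
  have h1 : ∀ b, Summable (fun a => pp F G a b * g b) :=
    fun b => (hasSum_pp_a F G b).summable.mul_right _
  have h2 : ∀ a, Summable (fun b => pp F G a b * g b) := fun a => summable_pp_g F G hg a
  have hcomm : (∑' (a : ℤ), ∑' (b : ℤ), pp F G a b * g b)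
      = ∑' (b : ℤ), ∑' (a : ℤ), pp F G a b * g b := Summable.tsum_comm' hu h1 h2
  rw [hcomm]
  apply tsum_congr
  intro b
  rw [tsum_mul_right, tsum_pp_a]

lemma summable_inner {g : ℤ → ℝ} (hg : Summable fun b => G.p b * |g b|) :
    Summable (fun a => ∑' b, pp F G a b * g b) := by
  have habs := summable_abs_prod F G hg
  have hswap : Summable (fun z : ℤ × ℤ => |pp F G z.1 z.2 * g z.2|) := by
    have := habs.prod_symm
    exact this
  have h3 := (summable_prod_of_nonneg (fun z : ℤ × ℤ => abs_nonneg
      (pp F G z.1 z.2 * g z.2))).mp hswap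
  apply Summable.of_abs
  apply Summable.of_nonneg_of_le (fun a => abs_nonneg _) (fun a => ?_) h3.2
  calc |∑' b, pp F G a b * g b| = ‖∑' b, pp F G a b * g b‖ := (Real.norm_eq_abs _).symm
    _ ≤ ∑' b, ‖pp F G a b * g b‖ := norm_tsum_le_tsum_norm (by
        simpa only [Real.norm_eq_abs] using (summable_pp_g F G hg a).abs)
    _ = ∑' b, |pp F G a b * g b| := by simp only [Real.norm_eq_abs]

end Sums


section Final

variable (F G : DiscDist) {φ : ℝ → ℝ}

lemma Dp_off_A {a : ℤ} (ha : a ∉ F.A) : Dp F G a = 0 := by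
  have hp0 : F.p a = 0 := F.hzero a ha
  have hpp0 : ∀ b, pp F G a b = 0 :=
    fun b => le_antisymm ((pp_le_p F G a b).trans hp0.le) (pp_nonneg F G a b)
  unfold Dp Mblock
  rw [tsum_congr (fun b => by rw [hpp0 b, zero_mul]), tsum_zero, hp0]
  ring

lemma summable_p_yt (D : DiscDist) (hD : Summable fun b => D.p b * |D.x b|) :
    Summable (fun b => D.p b * ytf D b) := by
  apply Summable.of_abs
  have e : (fun b => |D.p b * ytf D b|) = fun b => D.p b * |ytf D b| := by
    funext b
    rw [abs_mul, abs_of_nonneg (p_nonneg D b)]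
  rw [e]
  exact summable_abs_yt D hD

lemma tsum_p_yt_zero (D : DiscDist) (hD : Summable fun b => D.p b * |D.x b|) :
    ∑' b, D.p b * ytf D b = 0 := by
  have hpy : Summable (fun b => D.p b * D.x b) := by
    apply Summable.of_abs
    have e : (fun b => |D.p b * D.x b|) = fun b => D.p b * |D.x b| := by
      funext b
      rw [abs_mul, abs_of_nonneg (p_nonneg D b)]
    rw [e]
    exact hD
  have e : ∀ b, D.p b * ytf D b = D.p b * D.x b - D.mean * D.p b := by
    intro b
    unfold ytf
    ring
  rw [tsum_congr e, Summable.tsum_sub hpy (D.hsummable.mul_left _), tsum_mul_left, D.hsum, mul_one]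
  have : D.mean = ∑' a, D.p a * D.x a := rfl
  rw [← this]
  ring

lemma summable_Mblock (hG : Summable fun b => G.p b * |G.x b|) :
    Summable (fun a => Mblock F G a) :=
  summable_inner F G (summable_abs_yt G hG)

lemma summable_p_xt (hF : Summable fun a => F.p a * |F.x a|) :
    Summable (fun a => F.p a * xtf F a) := summable_p_yt F hF

lemma summable_Dp (hF : Summable fun a => F.p a * |F.x a|)
    (hG : Summable fun b => G.p b * |G.x b|) : Summable (Dp F G) := by
  have h1 := (summable_Mblock F G hG).sub (summable_p_xt F hF)
  exact h1.congr (fun a => rfl)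

lemma tsum_Dp_zero (hF : Summable fun a => F.p a * |F.x a|)
    (hG : Summable fun b => G.p b * |G.x b|) : ∑' a, Dp F G a = 0 := by
  have h1 : ∑' a, Dp F G a
      = (∑' a, Mblock F G a) - ∑' a, F.p a * xtf F a := by
    rw [← Summable.tsum_sub (summable_Mblock F G hG) (summable_p_xt F hF)]
    rfl
  rw [h1]
  have h2 : ∑' a, Mblock F G a = ∑' b, G.p b * ytf G b :=
    fubini_pp F G (summable_abs_yt G hG)
  rw [h2, tsum_p_yt_zero G hG]
  have h3 : (fun a => F.p a * xtf F a) = fun a => F.p a * ytf F a := rfl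
  rw [h3, tsum_p_yt_zero F hF]
  ring

lemma key_a (hG : Summable fun b => G.p b * |G.x b|)
    (hsGy : Summable fun b => G.p b * |φ (ytf G b)|) (sg : ℝ) (a : ℤ)
    (hsub : ∀ v, φ (xtf F a) + sg * (v - xtf F a) ≤ φ v) :
    F.p a * φ (xtf F a) + sg * Dp F G a ≤ ∑' b, pp F G a b * φ (ytf G b) := by
  have hs1 : Summable (fun b => (φ (xtf F a) - sg * xtf F a) * pp F G a b) :=
    (summable_pp_b F G a).mul_left _
  have hs2 : Summable (fun b => sg * (pp F G a b * ytf G b)) :=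
    (summable_pp_g F G (summable_abs_yt G hG) a).mul_left _
  have hple : ∀ b, (φ (xtf F a) - sg * xtf F a) * pp F G a b
      + sg * (pp F G a b * ytf G b) ≤ pp F G a b * φ (ytf G b) := by
    intro b
    have h1 := hsub (ytf G b)
    have h2 : pp F G a b * (φ (xtf F a) + sg * (ytf G b - xtf F a))
        ≤ pp F G a b * φ (ytf G b) := mul_le_mul_of_nonneg_left h1 (pp_nonneg F G a b)
    calc (φ (xtf F a) - sg * xtf F a) * pp F G a b + sg * (pp F G a b * ytf G b)
        = pp F G a b * (φ (xtf F a) + sg * (ytf G b - xtf F a)) := by ring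
      _ ≤ pp F G a b * φ (ytf G b) := h2
  calc F.p a * φ (xtf F a) + sg * Dp F G a
      = (φ (xtf F a) - sg * xtf F a) * F.p a + sg * Mblock F G a := by
        unfold Dp
        ring
    _ = ∑' b, ((φ (xtf F a) - sg * xtf F a) * pp F G a b
        + sg * (pp F G a b * ytf G b)) := by
        rw [Summable.tsum_add hs1 hs2, tsum_mul_left, tsum_mul_left, tsum_pp_b]
        rfl
    _ ≤ ∑' b, pp F G a b * φ (ytf G b) := by
        apply Summable.tsum_le_tsum hple (hs1.add hs2) (summable_pp_g F G hsGy a)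

lemma propagate (h : discoA F G) (hG : Summable fun b => G.p b * |G.x b|)
    {a a' : ℤ} (ha : a ∈ F.A) (ha' : a' ∈ F.A) (hle : a ≤ a') (hD : 0 ≤ Dp F G a) :
    0 ≤ Dp F G a' := by
  refine (Int.le_induction (motive := fun n _ => n ∈ F.A → 0 ≤ Dp F G n) ?_ ?_ a' hle) ha'
  · intro _
    exact hD
  · intro n hn IH hn1A
    have hnA : n ∈ F.A := F.hAconn a n (n+1) ha hn1A hn (by omega)
    exact step F G h hG hnA hn1A (IH hnA)

lemma all_zero_of_nonneg_tsum_zero {f : ℤ → ℝ} (hs : Summable f) (hnn : ∀ a, 0 ≤ f a)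
    (hz : ∑' a, f a = 0) : ∀ a, f a = 0 := by
  intro a
  refine le_antisymm ?_ (hnn a)
  have h1 := Summable.le_tsum hs a (fun j _ => hnn j)
  rw [hz] at h1
  exact h1

end Final

end Stmt14Aux

/-- If `F ≼_∧ G` for distributions with finite means, then `F ≤_dil G`. -/
theorem stmt_14 (F G : DiscDist)
    (hF : Summable (fun a : ℤ => F.p a * |F.x a|))
    (hG : Summable (fun b : ℤ => G.p b * |G.x b|))
    (h : discoA F G) :
    ∀ φ : ℝ → ℝ, ConvexOn ℝ Set.univ φ →
      Summable (fun a : ℤ => F.p a * |φ (F.x a - F.mean)|) →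
      Summable (fun b : ℤ => G.p b * |φ (G.x b - G.mean)|) →
      ∑' a : ℤ, F.p a * φ (F.x a - F.mean) ≤
        ∑' b : ℤ, G.p b * φ (G.x b - G.mean) := by
  intro φ hφ hsF hsG
  open Stmt14Aux in
  show ∑' a : ℤ, F.p a * φ (xtf F a) ≤ ∑' b : ℤ, G.p b * φ (ytf G b)
  have hsGy : Summable (fun b => G.p b * |φ (ytf G b)|) := hsG
  have hsFy : Summable (fun a => F.p a * |φ (xtf F a)|) := hsF
  have hpφ : Summable (fun a => F.p a * φ (xtf F a)) := by
    apply Summable.of_abs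
    have e : (fun a => |F.p a * φ (xtf F a)|) = fun a => F.p a * |φ (xtf F a)| := by
      funext a
      rw [abs_mul, abs_of_nonneg (p_nonneg F a)]
    rw [e]
    exact hsFy
  have hsumDp : Summable (Dp F G) := summable_Dp F G hF hG
  have htsumDp : ∑' a, Dp F G a = 0 := tsum_Dp_zero F G hF hG
  have hInner : Summable (fun a => ∑' b, pp F G a b * φ (ytf G b)) :=
    summable_inner F G hsGy
  have hfub : ∑' a, (∑' b, pp F G a b * φ (ytf G b)) = ∑' b, G.p b * φ (ytf G b) :=
    fubini_pp F G hsGy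
  suffices hmain : ∃ s : ℝ, ∀ a, F.p a * φ (xtf F a) + s * Dp F G a
      ≤ ∑' b, pp F G a b * φ (ytf G b) by
    obtain ⟨s, hs⟩ := hmain
    have h1 : ∑' a, (F.p a * φ (xtf F a) + s * Dp F G a)
        ≤ ∑' a, (∑' b, pp F G a b * φ (ytf G b)) :=
      Summable.tsum_le_tsum hs (hpφ.add (hsumDp.mul_left s)) hInner
    rw [Summable.tsum_add hpφ (hsumDp.mul_left s), tsum_mul_left, htsumDp, mul_zero, add_zero,
      hfub] at h1
    exact h1
  by_cases hall : ∀ a, 0 ≤ Dp F G a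
  · have hz : ∀ a, Dp F G a = 0 :=
      all_zero_of_nonneg_tsum_zero hsumDp hall htsumDp
    refine ⟨0, fun a => ?_⟩
    have hk := key_a F G hG hsGy (gsl φ (xtf F a)) a (fun v => gsl_subgrad hφ _ v)
    rw [hz a, mul_zero, add_zero] at hk ⊢
    exact hk
  · push_neg at hall
    obtain ⟨a₁, ha₁⟩ := hall
    by_cases hall2 : ∀ a, Dp F G a ≤ 0
    · exfalso
      have hz : ∀ a, (fun a => -Dp F G a) a = 0 := by
        apply all_zero_of_nonneg_tsum_zero hsumDp.neg
          (fun a => neg_nonneg.2 (hall2 a))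
        rw [tsum_neg, htsumDp, neg_zero]
      have := hz a₁
      simp only [neg_eq_zero] at this
      rw [this] at ha₁
      exact lt_irrefl 0 ha₁
    · push_neg at hall2
      obtain ⟨a₂, ha₂⟩ := hall2
      have hmemN : ∀ z, Dp F G z < 0 → z ∈ F.A := by
        intro z hz
        by_contra hh
        rw [Dp_off_A F G hh] at hz
        exact lt_irrefl 0 hz
      have ha₂A : a₂ ∈ F.A := by
        by_contra hh
        rw [Dp_off_A F G hh] at ha₂
        exact lt_irrefl 0 ha₂
      have hlt_a₂ : ∀ z, Dp F G z < 0 → z < a₂ := by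
        intro z hz
        by_contra hh
        push_neg at hh
        have := propagate F G h hG ha₂A (hmemN z hz) hh ha₂.le
        linarith
      obtain ⟨amax, hamaxneg, hamaxgr⟩ :=
        Int.exists_greatest_of_bdd (P := fun z => Dp F G z < 0)
          ⟨a₂, fun z hz => (hlt_a₂ z hz).le⟩ ⟨a₁, ha₁⟩
      have hamaxA : amax ∈ F.A := hmemN amax hamaxneg
      have hamaxlt : amax < a₂ := hlt_a₂ amax hamaxneg
      have hamax1A : amax + 1 ∈ F.A := F.hAconn amax (amax+1) a₂ hamaxA ha₂A (by omega) (by omega)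
      refine ⟨gsl φ (xtf F (amax+1)), fun a => ?_⟩
      have hk := key_a F G hG hsGy (gsl φ (xtf F a)) a (fun v => gsl_subgrad hφ _ v)
      rcases lt_trichotomy (Dp F G a) 0 with hDa | hDa | hDa
      · have haA := hmemN a hDa
        have hle : xtf F a ≤ xtf F (amax+1) := by
          unfold xtf
          have h1 : a ≤ amax := hamaxgr a hDa
          have := xmono F haA hamax1A (by omega)
          linarith
        have hmono' : gsl φ (xtf F a) ≤ gsl φ (xtf F (amax+1)) := gsl_mono hφ hle
        have h2 : gsl φ (xtf F (amax+1)) * Dp F G a ≤ gsl φ (xtf F a) * Dp F G a :=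
          mul_le_mul_of_nonpos_right hmono' hDa.le
        linarith
      · rw [hDa, mul_zero, add_zero] at hk ⊢
        exact hk
      · have haA : a ∈ F.A := by
          by_contra hh
          rw [Dp_off_A F G hh] at hDa
          exact lt_irrefl 0 hDa
        have hge : amax + 1 ≤ a := by
          by_contra hh
          push_neg at hh
          have h1 : a ≤ amax := by omega
          have := propagate F G h hG haA hamaxA h1 hDa.le
          linarith [hamaxneg]
        have hle : xtf F (amax+1) ≤ xtf F a := by
          unfold xtf
          have := xmono F hamax1A haA hge
          linarith
        have hmono' : gsl φ (xtf F (amax+1)) ≤ gsl φ (xtf F a) := gsl_mono hφ hle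
        have h2 : gsl φ (xtf F (amax+1)) * Dp F G a ≤ gsl φ (xtf F a) * Dp F G a :=
          mul_le_mul_of_nonneg_right hmono' hDa.le
        linarith
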